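/- Let a₁,a₂,a₃,b₁,b₂,b₃,c₁,c₂,c₃ be holomorphic functions of (x,y) on an open set Ω ⊆ ℂ², and suppose z₁,z₂,z₃ : Ω → ℂ are holomorphic solutions of the system ∂ₓₓz = a₁∂ₓz + a₂∂ᵧz + a₃z, ∂ₓᵧz = b₁∂ₓz + b₂∂ᵧz + b₃z, ∂ᵧᵧz = c₁∂ₓz + c₂∂ᵧz + c₃z. Assume z₃ ≠ 0 on Ω and that u₁ := z₁/z₃, u₂ := z₂/z₃ satisfy J(u₁,u₂) ≠ 0 on Ω. Then on Ω: {u₁,u₂;x,y}ₓ = a₂, {u₁,u₂;x,y}ᵧ = c₁, [u₁,u₂;x,y]ₓ = 2b₂ − a₁, and [u₁,u₂;x,y]ᵧ = 2b₁ − c₂. -/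

import Mathlib

open Complex Matrix

noncomputable section

/-- Partial derivative in the first complex variable. -/
def pdx (f : ℂ × ℂ → ℂ) (p : ℂ × ℂ) : ℂ := deriv (fun x => f (x, p.2)) p.1

/-- Partial derivative in the second complex variable. -/
def pdy (f : ℂ × ℂ → ℂ) (p : ℂ × ℂ) : ℂ := deriv (fun y => f (p.1, y)) p.2

/-- The Jacobian `J(u₁,u₂) = ∂ₓu₁·∂ᵧu₂ − ∂ₓu₂·∂ᵧu₁`. -/
def Jac (u₁ u₂ : ℂ × ℂ → ℂ) (p : ℂ × ℂ) : ℂ :=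
  pdx u₁ p * pdy u₂ p - pdx u₂ p * pdy u₁ p

/-- The GL(3) derivative `{u₁,u₂;x,y}ₓ`. -/
def brX (u₁ u₂ : ℂ × ℂ → ℂ) (p : ℂ × ℂ) : ℂ :=
  (pdx u₁ p * pdx (pdx u₂) p - pdx u₂ p * pdx (pdx u₁) p) / Jac u₁ u₂ p

/-- The GL(3) derivative `{u₁,u₂;x,y}ᵧ`. -/
def brY (u₁ u₂ : ℂ × ℂ → ℂ) (p : ℂ × ℂ) : ℂ :=
  -(pdy u₁ p * pdy (pdy u₂) p - pdy u₂ p * pdy (pdy u₁) p) / Jac u₁ u₂ p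

/-- The GL(3) derivative `[u₁,u₂;x,y]ₓ`. -/
def sqX (u₁ u₂ : ℂ × ℂ → ℂ) (p : ℂ × ℂ) : ℂ :=
  ((pdy u₁ p * pdx (pdx u₂) p - pdy u₂ p * pdx (pdx u₁) p)
      + 2 * (pdx u₁ p * pdx (pdy u₂) p - pdx u₂ p * pdx (pdy u₁) p)) / Jac u₁ u₂ p

/-- The GL(3) derivative `[u₁,u₂;x,y]ᵧ`. -/
def sqY (u₁ u₂ : ℂ × ℂ → ℂ) (p : ℂ × ℂ) : ℂ :=
  -((pdx u₁ p * pdy (pdy u₂) p - pdx u₂ p * pdy (pdy u₁) p)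
      + 2 * (pdy u₁ p * pdx (pdy u₂) p - pdy u₂ p * pdx (pdy u₁) p)) / Jac u₁ u₂ p

open Metric Filter FormalMultilinearSeries

lemma dslX {f : ℂ × ℂ → ℂ} {p : ℂ × ℂ} (h : DifferentiableAt ℂ f p) :
    DifferentiableAt ℂ (fun x => f (x, p.2)) p.1 :=
  h.comp p.1 (differentiableAt_fun_id.prodMk (differentiableAt_const _))

lemma dslY {f : ℂ × ℂ → ℂ} {p : ℂ × ℂ} (h : DifferentiableAt ℂ f p) :
    DifferentiableAt ℂ (fun y => f (p.1, y)) p.2 :=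
  h.comp p.2 ((differentiableAt_const _).prodMk differentiableAt_fun_id)

lemma pdx_congr {Ω : Set (ℂ × ℂ)} (hΩ : IsOpen Ω) {f g : ℂ × ℂ → ℂ}
    (h : Set.EqOn f g Ω) {p : ℂ × ℂ} (hp : p ∈ Ω) : pdx f p = pdx g p := by
  apply Filter.EventuallyEq.deriv_eq
  have hc : ContinuousAt (fun x : ℂ => (x, p.2)) p.1 :=
    (continuous_id.prodMk continuous_const).continuousAt
  have hmem : ∀ᶠ x in nhds p.1, (x, p.2) ∈ Ω := hc.preimage_mem_nhds (hΩ.mem_nhds hp)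
  filter_upwards [hmem] with x hx using h hx

lemma pdy_congr {Ω : Set (ℂ × ℂ)} (hΩ : IsOpen Ω) {f g : ℂ × ℂ → ℂ}
    (h : Set.EqOn f g Ω) {p : ℂ × ℂ} (hp : p ∈ Ω) : pdy f p = pdy g p := by
  apply Filter.EventuallyEq.deriv_eq
  have hc : ContinuousAt (fun y : ℂ => (p.1, y)) p.2 :=
    (continuous_const.prodMk continuous_id).continuousAt
  have hmem : ∀ᶠ y in nhds p.2, (p.1, y) ∈ Ω := hc.preimage_mem_nhds (hΩ.mem_nhds hp)
  filter_upwards [hmem] with y hy using h hy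

lemma pdx_mul {f g : ℂ × ℂ → ℂ} {p : ℂ × ℂ}
    (hf : DifferentiableAt ℂ (fun x => f (x, p.2)) p.1)
    (hg : DifferentiableAt ℂ (fun x => g (x, p.2)) p.1) :
    pdx (fun q => f q * g q) p = pdx f p * g p + f p * pdx g p :=
  deriv_mul hf hg

lemma pdy_mul {f g : ℂ × ℂ → ℂ} {p : ℂ × ℂ}
    (hf : DifferentiableAt ℂ (fun y => f (p.1, y)) p.2)
    (hg : DifferentiableAt ℂ (fun y => g (p.1, y)) p.2) :
    pdy (fun q => f q * g q) p = pdy f p * g p + f p * pdy g p :=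
  deriv_mul hf hg

lemma pdx_muladd {f g h k : ℂ × ℂ → ℂ} {p : ℂ × ℂ}
    (hf : DifferentiableAt ℂ (fun x => f (x, p.2)) p.1)
    (hg : DifferentiableAt ℂ (fun x => g (x, p.2)) p.1)
    (hh : DifferentiableAt ℂ (fun x => h (x, p.2)) p.1)
    (hk : DifferentiableAt ℂ (fun x => k (x, p.2)) p.1) :
    pdx (fun q => f q * g q + h q * k q) p
      = (pdx f p * g p + f p * pdx g p) + (pdx h p * k p + h p * pdx k p) := by
  have h1 : pdx (fun q => f q * g q + h q * k q) p
      = deriv (fun x => f (x, p.2) * g (x, p.2) + h (x, p.2) * k (x, p.2)) p.1 := rfl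
  rw [h1, deriv_fun_add (hf.fun_mul hg) (hh.fun_mul hk), deriv_fun_mul hf hg, deriv_fun_mul hh hk]; rfl

lemma pdy_muladd {f g h k : ℂ × ℂ → ℂ} {p : ℂ × ℂ}
    (hf : DifferentiableAt ℂ (fun y => f (p.1, y)) p.2)
    (hg : DifferentiableAt ℂ (fun y => g (p.1, y)) p.2)
    (hh : DifferentiableAt ℂ (fun y => h (p.1, y)) p.2)
    (hk : DifferentiableAt ℂ (fun y => k (p.1, y)) p.2) :
    pdy (fun q => f q * g q + h q * k q) p
      = (pdy f p * g p + f p * pdy g p) + (pdy h p * k p + h p * pdy k p) := by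
  have h1 : pdy (fun q => f q * g q + h q * k q) p
      = deriv (fun y => f (p.1, y) * g (p.1, y) + h (p.1, y) * k (p.1, y)) p.2 := rfl
  rw [h1, deriv_fun_add (hf.fun_mul hg) (hh.fun_mul hk), deriv_fun_mul hf hg, deriv_fun_mul hh hk]; rfl

/-- x-slice of `pdx f` is differentiable (1D analyticity). -/
lemma dslX_pdx {Ω : Set (ℂ × ℂ)} (hΩ : IsOpen Ω) {f : ℂ × ℂ → ℂ}
    (hf : DifferentiableOn ℂ f Ω) {p : ℂ × ℂ} (hp : p ∈ Ω) :
    DifferentiableAt ℂ (fun x => pdx f (x, p.2)) p.1 := by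
  set s : Set ℂ := {x | (x, p.2) ∈ Ω} with hs
  have hso : IsOpen s := hΩ.preimage (continuous_id.prodMk continuous_const)
  have hds : DifferentiableOn ℂ (fun x => f (x, p.2)) s := fun x hx =>
    (dslX ((hf _ hx).differentiableAt (hΩ.mem_nhds hx))).differentiableWithinAt
  have : AnalyticOnNhd ℂ (deriv fun x => f (x, p.2)) s := (hds.analyticOnNhd hso).deriv
  exact (this p.1 hp).differentiableAt

/-- y-slice of `pdy f` is differentiable (1D analyticity). -/
lemma dslY_pdy {Ω : Set (ℂ × ℂ)} (hΩ : IsOpen Ω) {f : ℂ × ℂ → ℂ}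
    (hf : DifferentiableOn ℂ f Ω) {p : ℂ × ℂ} (hp : p ∈ Ω) :
    DifferentiableAt ℂ (fun y => pdy f (p.1, y)) p.2 := by
  set s : Set ℂ := {y | (p.1, y) ∈ Ω} with hs
  have hso : IsOpen s := hΩ.preimage (continuous_const.prodMk continuous_id)
  have hds : DifferentiableOn ℂ (fun y => f (p.1, y)) s := fun y hy =>
    (dslY ((hf _ hy).differentiableAt (hΩ.mem_nhds hy))).differentiableWithinAt
  have : AnalyticOnNhd ℂ (deriv fun y => f (p.1, y)) s := (hds.analyticOnNhd hso).deriv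
  exact (this p.2 hp).differentiableAt

/-- The hard Hartogs-type lemma: the x-slice of `pdy f` is differentiable. -/
lemma dslX_pdy {Ω : Set (ℂ × ℂ)} (hΩ : IsOpen Ω) {f : ℂ × ℂ → ℂ}
    (hf : DifferentiableOn ℂ f Ω) {p : ℂ × ℂ} (hp : p ∈ Ω) :
    DifferentiableAt ℂ (fun x => pdy f (x, p.2)) p.1 := by
  obtain ⟨r, hr0, hrΩ⟩ := Metric.nhds_basis_closedBall.mem_iff.1 (hΩ.mem_nhds hp)
  lift r to NNReal using hr0.le
  have hr0' : (0:ℝ) < r := hr0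
  have hrne : (r:ℝ) ≠ 0 := ne_of_gt hr0'
  have hin : ∀ {x y : ℂ}, dist x p.1 ≤ r → dist y p.2 ≤ r → (x, y) ∈ Ω := by
    intro x y hx hy
    apply hrΩ
    rw [Metric.mem_closedBall, Prod.dist_eq]
    exact max_le hx hy
  obtain ⟨M, hM⟩ := (isCompact_closedBall p (r:ℝ)).exists_bound_of_continuousOn
    ((hf.mono hrΩ).continuousOn)
  have hM0 : 0 ≤ M := le_trans (norm_nonneg _) (hM p (Metric.mem_closedBall_self hr0'.le))
  -- slices have power series
  have hslice : ∀ x ∈ Metric.closedBall p.1 (r:ℝ),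
      DifferentiableOn ℂ (fun y => f (x, y)) (Metric.closedBall p.2 (r:ℝ)) := by
    intro x hx y hy
    have hxy : (x, y) ∈ Ω := hin (Metric.mem_closedBall.1 hx) (Metric.mem_closedBall.1 hy)
    exact (dslY ((hf _ hxy).differentiableAt (hΩ.mem_nhds hxy))).differentiableWithinAt
  set P : ℂ → FormalMultilinearSeries ℂ ℂ ℂ :=
    fun x => cauchyPowerSeries (fun y => f (x, y)) p.2 r with hPdef
  have hps : ∀ x ∈ Metric.closedBall p.1 (r:ℝ),
      HasFPowerSeriesOnBall (fun y => f (x, y)) (P x) p.2 r :=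
    fun x hx => (hslice x hx).hasFPowerSeriesOnBall hr0
  -- coefficient bounds
  have hcoeff : ∀ x ∈ Metric.closedBall p.1 (r:ℝ), ∀ n, ‖(P x).coeff n‖ ≤ M / (r:ℝ)^n := by
    intro x hx n
    have hmemc : ∀ θ : ℝ, (x, circleMap p.2 r θ) ∈ Metric.closedBall p (r:ℝ) := by
      intro θ
      rw [Metric.mem_closedBall, Prod.dist_eq]
      refine max_le (Metric.mem_closedBall.1 hx) ?_
      have := circleMap_mem_closedBall p.2 hr0'.le θ
      simpa using this
    have hcont : Continuous fun θ : ℝ => ‖f (x, circleMap p.2 r θ)‖ := by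
      refine Continuous.norm ?_
      refine ContinuousOn.comp_continuous ((hf.mono hrΩ).continuousOn) ?_ hmemc
      exact continuous_const.prodMk (continuous_circleMap _ _)
    have hint : (∫ θ in (0:ℝ)..2 * Real.pi, ‖f (x, circleMap p.2 r θ)‖)
        ≤ 2 * Real.pi * M := by
      calc (∫ θ in (0:ℝ)..2 * Real.pi, ‖f (x, circleMap p.2 r θ)‖)
          ≤ ∫ _θ in (0:ℝ)..2 * Real.pi, M := by
            refine intervalIntegral.integral_mono_on Real.two_pi_pos.le
              (hcont.intervalIntegrable _ _) (intervalIntegrable_const) ?_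
            intro θ _
            exact hM _ (hmemc θ)
        _ = 2 * Real.pi * M := by simp [mul_comm]
    calc ‖(P x).coeff n‖ = ‖P x n‖ := norm_apply_eq_norm_coef.symm
      _ ≤ ((2 * Real.pi)⁻¹ * ∫ θ in (0:ℝ)..2 * Real.pi, ‖f (x, circleMap p.2 r θ)‖)
            * |(r:ℝ)|⁻¹ ^ n := norm_cauchyPowerSeries_le _ _ _ n
      _ ≤ ((2 * Real.pi)⁻¹ * (2 * Real.pi * M)) * |(r:ℝ)|⁻¹ ^ n := by
            gcongr
      _ = M / (r:ℝ)^n := by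
            have h2pi : (2 * Real.pi)⁻¹ * (2 * Real.pi * M) = M := by
              field_simp
            rw [h2pi, _root_.abs_of_nonneg hr0'.le, inv_pow, div_eq_mul_inv]
  set g : ℂ → ℂ := fun x => pdy f (x, p.2) with hgdef
  have hgc : ∀ x ∈ Metric.closedBall p.1 (r:ℝ), g x = (P x).coeff 1 := by
    intro x hx
    exact ((hps x hx).hasFPowerSeriesAt).deriv
  set F : ℂ → ℂ → ℂ := fun δ x => (f (x, p.2 + δ) - f (x, p.2)) / δ with hFdef
  -- key estimate
  have hbound : ∀ δ : ℂ, δ ≠ 0 → ‖δ‖ ≤ (r:ℝ)/2 → ∀ x ∈ Metric.closedBall p.1 (r:ℝ),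
      ‖F δ x - g x‖ ≤ 2 * M * ‖δ‖ / (r:ℝ)^2 := by
    intro δ hδ0 hδr x hx
    have hps' := hps x hx
    have hδltr : ‖δ‖ < (r:ℝ) := lt_of_le_of_lt hδr (by linarith)
    have hmem : p.2 + δ ∈ Metric.eball p.2 (r : ENNReal) := by
      rw [Metric.mem_eball, edist_eq_enorm_sub]
      simp only [add_sub_cancel_left]
      exact_mod_cast hδltr
    have hsum : HasSum (fun n => δ ^ n • (P x).coeff n) (f (x, p.2 + δ)) := by
      have := hps'.hasSum_sub hmem
      simpa [apply_eq_pow_smul_coeff] using this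
    have h2 : HasSum (fun n => δ ^ (n + 2) • (P x).coeff (n + 2))
        (f (x, p.2 + δ) - ((P x).coeff 0 + δ • (P x).coeff 1)) := by
      have := (hasSum_nat_add_iff' (f := fun n => δ ^ n • (P x).coeff n) 2).2 hsum
      simpa [Finset.sum_range_succ] using this
    set q : ℝ := ‖δ‖ / (r:ℝ) with hqdef
    have hq0 : 0 ≤ q := by positivity
    have hq2 : q ≤ 1/2 := by
      rw [hqdef, div_le_div_iff₀ hr0' (by norm_num : (0:ℝ) < 2)]
      linarith
    have hq1 : q < 1 := lt_of_le_of_lt hq2 (by norm_num)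
    have hterm : ∀ n : ℕ, ‖δ ^ (n + 2) • (P x).coeff (n + 2)‖ ≤ (M * q^2) * q^n := by
      intro n
      rw [norm_smul, norm_pow]
      calc ‖δ‖ ^ (n + 2) * ‖(P x).coeff (n + 2)‖
          ≤ ‖δ‖ ^ (n + 2) * (M / (r:ℝ)^(n+2)) := by
            gcongr
            exact hcoeff x hx (n+2)
        _ = (M * q^2) * q^n := by
            rw [hqdef]
            rw [div_pow, div_pow, pow_add, pow_add]
            field_simp
    have hsummable : Summable (fun n : ℕ => (M * q^2) * q^n) :=
      (summable_geometric_of_lt_one hq0 hq1).mul_left _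
    have hnsum : Summable (fun n : ℕ => ‖δ ^ (n + 2) • (P x).coeff (n + 2)‖) :=
      Summable.of_nonneg_of_le (fun n => norm_nonneg _) hterm hsummable
    have hnorm : ‖f (x, p.2 + δ) - ((P x).coeff 0 + δ • (P x).coeff 1)‖
        ≤ (M * q^2) * (1 - q)⁻¹ := by
      rw [← h2.tsum_eq]
      calc ‖∑' n, δ ^ (n + 2) • (P x).coeff (n + 2)‖
          ≤ ∑' n, ‖δ ^ (n + 2) • (P x).coeff (n + 2)‖ := norm_tsum_le_tsum_norm hnsum
        _ ≤ ∑' n, (M * q^2) * q^n := Summable.tsum_le_tsum hterm hnsum hsummable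
        _ = (M * q^2) * (1 - q)⁻¹ := by
            rw [tsum_mul_left, tsum_geometric_of_lt_one hq0 hq1]
    have hc0 : (P x).coeff 0 = f (x, p.2) := by
      have := hps'.coeff_zero 1
      exact this
    have hFg : F δ x - g x
        = (f (x, p.2 + δ) - ((P x).coeff 0 + δ • (P x).coeff 1)) / δ := by
      rw [hgc x hx, hc0]
      simp only [hFdef, smul_eq_mul]
      field_simp
      ring
    rw [hFg, norm_div]
    have hδpos : (0:ℝ) < ‖δ‖ := norm_pos_iff.2 hδ0
    have hinv2 : (1 - q)⁻¹ ≤ 2 := by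
      rw [inv_le_comm₀ (by linarith) (by norm_num : (0:ℝ) < 2)]
      linarith
    calc ‖f (x, p.2 + δ) - ((P x).coeff 0 + δ • (P x).coeff 1)‖ / ‖δ‖
        ≤ ((M * q^2) * (1 - q)⁻¹) / ‖δ‖ := by gcongr
      _ ≤ ((M * q^2) * 2) / ‖δ‖ := by
          gcongr
      _ = 2 * M * ‖δ‖ / (r:ℝ)^2 := by
          have habs : ‖δ‖ ≠ 0 := (norm_pos_iff.mpr hδ0).ne'
          rw [hqdef]
          field_simp [habs]
  -- uniform convergence
  have hneb : (nhdsWithin (0:ℂ) {(0:ℂ)}ᶜ).NeBot := by infer_instance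
  have hunif : TendstoUniformlyOn F g (nhdsWithin (0:ℂ) {(0:ℂ)}ᶜ)
      (Metric.closedBall p.1 (r:ℝ)) := by
    rw [Metric.tendstoUniformlyOn_iff]
    intro ε hε
    have hev1 : ∀ᶠ δ in nhdsWithin (0:ℂ) {(0:ℂ)}ᶜ, δ ∈ ({(0:ℂ)}ᶜ : Set ℂ) :=
      self_mem_nhdsWithin
    have hsmall : (0:ℝ) < min ((r:ℝ)/2) (ε * (r:ℝ)^2 / (4*M+1)) := by
      apply lt_min (by linarith)
      positivity
    have hev2 : ∀ᶠ δ in nhdsWithin (0:ℂ) {(0:ℂ)}ᶜ,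
        ‖δ‖ < min ((r:ℝ)/2) (ε * (r:ℝ)^2 / (4*M+1)) := by
      apply Filter.Eventually.filter_mono nhdsWithin_le_nhds
      have := Metric.ball_mem_nhds (0:ℂ) hsmall
      filter_upwards [this] with δ hδ
      simpa [dist_eq_norm] using hδ
    filter_upwards [hev1, hev2] with δ hδ0 hδs x hx
    rw [dist_comm, dist_eq_norm]
    have hb := hbound δ hδ0 (le_of_lt (lt_of_lt_of_le hδs (min_le_left _ _))) x hx
    have hδ2 : ‖δ‖ < ε * (r:ℝ)^2 / (4*M+1) := lt_of_lt_of_le hδs (min_le_right _ _)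
    have : 2 * M * ‖δ‖ / (r:ℝ)^2 < ε := by
      rw [div_lt_iff₀ (by positivity : (0:ℝ) < (r:ℝ)^2)]
      rw [lt_div_iff₀ (by positivity : (0:ℝ) < 4*M+1)] at hδ2
      nlinarith [norm_nonneg δ]
    exact lt_of_le_of_lt hb this
  -- differentiability of approximants
  have hFdiff : ∀ᶠ δ in nhdsWithin (0:ℂ) {(0:ℂ)}ᶜ,
      DifferentiableOn ℂ (F δ) (Metric.ball p.1 (r:ℝ)) := by
    apply Filter.Eventually.filter_mono nhdsWithin_le_nhds
    filter_upwards [Metric.ball_mem_nhds (0:ℂ) hr0'] with δ hδ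
    intro x hx
    have hδr : ‖δ‖ ≤ (r:ℝ) := by
      simp only [Metric.mem_ball, dist_zero_right] at hδ
      exact hδ.le
    have hx' : dist x p.1 ≤ (r:ℝ) := (Metric.mem_ball.1 hx).le
    have hm1 : (x, p.2 + δ) ∈ Ω := hin hx' (by simpa [dist_eq_norm] using hδr)
    have hm2 : (x, p.2) ∈ Ω := hin hx' (by simp [hr0'.le])
    have hd1 : DifferentiableAt ℂ (fun x' => f (x', p.2 + δ)) x :=
      dslX (p := (x, p.2 + δ)) ((hf _ hm1).differentiableAt (hΩ.mem_nhds hm1))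
    have hd2 : DifferentiableAt ℂ (fun x' => f (x', p.2)) x :=
      dslX (p := (x, p.2)) ((hf _ hm2).differentiableAt (hΩ.mem_nhds hm2))
    exact ((hd1.sub hd2).div_const δ).differentiableWithinAt
  have hgd : DifferentiableOn ℂ g (Metric.ball p.1 (r:ℝ)) :=
    (hunif.tendstoLocallyUniformlyOn.mono Metric.ball_subset_closedBall).differentiableOn
      hFdiff Metric.isOpen_ball
  exact (hgd p.1 (Metric.mem_ball_self hr0')).differentiableAt
    (Metric.isOpen_ball.mem_nhds (Metric.mem_ball_self hr0'))


/-- If `z₁,z₂,z₃` solve the linear system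
`∂ₓₓz = a₁∂ₓz + a₂∂ᵧz + a₃z`, `∂ₓᵧz = b₁∂ₓz + b₂∂ᵧz + b₃z`,
`∂ᵧᵧz = c₁∂ₓz + c₂∂ᵧz + c₃z`, then the ratios `u₁ = z₁/z₃`, `u₂ = z₂/z₃` satisfy
`{u₁,u₂;x,y}ₓ = a₂`, `{u₁,u₂;x,y}ᵧ = c₁`, `[u₁,u₂;x,y]ₓ = 2b₂ − a₁`,
`[u₁,u₂;x,y]ᵧ = 2b₁ − c₂`. -/
theorem statement9 (Ω : Set (ℂ × ℂ)) (hΩ : IsOpen Ω)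
    (a₁ a₂ a₃ b₁ b₂ b₃ c₁ c₂ c₃ : ℂ × ℂ → ℂ)
    (ha₁ : DifferentiableOn ℂ a₁ Ω) (ha₂ : DifferentiableOn ℂ a₂ Ω)
    (ha₃ : DifferentiableOn ℂ a₃ Ω) (hb₁ : DifferentiableOn ℂ b₁ Ω)
    (hb₂ : DifferentiableOn ℂ b₂ Ω) (hb₃ : DifferentiableOn ℂ b₃ Ω)
    (hc₁ : DifferentiableOn ℂ c₁ Ω) (hc₂ : DifferentiableOn ℂ c₂ Ω)
    (hc₃ : DifferentiableOn ℂ c₃ Ω)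
    (z₁ z₂ z₃ : ℂ × ℂ → ℂ)
    (hz₁ : DifferentiableOn ℂ z₁ Ω) (hz₂ : DifferentiableOn ℂ z₂ Ω)
    (hz₃ : DifferentiableOn ℂ z₃ Ω)
    (hsys₁ : ∀ p ∈ Ω,
      pdx (pdx z₁) p = a₁ p * pdx z₁ p + a₂ p * pdy z₁ p + a₃ p * z₁ p ∧
      pdx (pdy z₁) p = b₁ p * pdx z₁ p + b₂ p * pdy z₁ p + b₃ p * z₁ p ∧
      pdy (pdy z₁) p = c₁ p * pdx z₁ p + c₂ p * pdy z₁ p + c₃ p * z₁ p)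
    (hsys₂ : ∀ p ∈ Ω,
      pdx (pdx z₂) p = a₁ p * pdx z₂ p + a₂ p * pdy z₂ p + a₃ p * z₂ p ∧
      pdx (pdy z₂) p = b₁ p * pdx z₂ p + b₂ p * pdy z₂ p + b₃ p * z₂ p ∧
      pdy (pdy z₂) p = c₁ p * pdx z₂ p + c₂ p * pdy z₂ p + c₃ p * z₂ p)
    (hsys₃ : ∀ p ∈ Ω,
      pdx (pdx z₃) p = a₁ p * pdx z₃ p + a₂ p * pdy z₃ p + a₃ p * z₃ p ∧
      pdx (pdy z₃) p = b₁ p * pdx z₃ p + b₂ p * pdy z₃ p + b₃ p * z₃ p ∧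
      pdy (pdy z₃) p = c₁ p * pdx z₃ p + c₂ p * pdy z₃ p + c₃ p * z₃ p)
    (hz₃0 : ∀ p ∈ Ω, z₃ p ≠ 0)
    (u₁ u₂ : ℂ × ℂ → ℂ)
    (hu₁ : u₁ = fun p => z₁ p / z₃ p) (hu₂ : u₂ = fun p => z₂ p / z₃ p)
    (hJ : ∀ p ∈ Ω, Jac u₁ u₂ p ≠ 0) :
    ∀ p ∈ Ω,
      brX u₁ u₂ p = a₂ p ∧
      brY u₁ u₂ p = c₁ p ∧
      sqX u₁ u₂ p = 2 * b₂ p - a₁ p ∧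
      sqY u₁ u₂ p = 2 * b₁ p - c₂ p := by
  intro p hp
  have hu₁d : DifferentiableOn ℂ u₁ Ω := by
    intro q hq
    rw [hu₁]
    simp only [div_eq_mul_inv]
    exact (hz₁ q hq).mul ((hz₃ q hq).inv (hz₃0 q hq))
  have hu₂d : DifferentiableOn ℂ u₂ Ω := by
    intro q hq
    rw [hu₂]
    simp only [div_eq_mul_inv]
    exact (hz₂ q hq).mul ((hz₃ q hq).inv (hz₃0 q hq))
  have dAt : ∀ {f : ℂ × ℂ → ℂ}, DifferentiableOn ℂ f Ω → ∀ q ∈ Ω, DifferentiableAt ℂ f q :=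
    fun hf q hq => (hf q hq).differentiableAt (hΩ.mem_nhds hq)
  have hE₁ : Set.EqOn z₁ (fun q => u₁ q * z₃ q) Ω := fun q hq => by
    simp only [hu₁]; exact (div_mul_cancel₀ _ (hz₃0 q hq)).symm
  have hE₂ : Set.EqOn z₂ (fun q => u₂ q * z₃ q) Ω := fun q hq => by
    simp only [hu₂]; exact (div_mul_cancel₀ _ (hz₃0 q hq)).symm
  have hx₁ : Set.EqOn (pdx z₁) (fun q => pdx u₁ q * z₃ q + u₁ q * pdx z₃ q) Ω := fun q hq => by
    rw [pdx_congr hΩ hE₁ hq, pdx_mul (dslX (dAt hu₁d q hq)) (dslX (dAt hz₃ q hq))]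
  have hy₁ : Set.EqOn (pdy z₁) (fun q => pdy u₁ q * z₃ q + u₁ q * pdy z₃ q) Ω := fun q hq => by
    rw [pdy_congr hΩ hE₁ hq, pdy_mul (dslY (dAt hu₁d q hq)) (dslY (dAt hz₃ q hq))]
  have hx₂ : Set.EqOn (pdx z₂) (fun q => pdx u₂ q * z₃ q + u₂ q * pdx z₃ q) Ω := fun q hq => by
    rw [pdx_congr hΩ hE₂ hq, pdx_mul (dslX (dAt hu₂d q hq)) (dslX (dAt hz₃ q hq))]
  have hy₂ : Set.EqOn (pdy z₂) (fun q => pdy u₂ q * z₃ q + u₂ q * pdy z₃ q) Ω := fun q hq => by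
    rw [pdy_congr hΩ hE₂ hq, pdy_mul (dslY (dAt hu₂d q hq)) (dslY (dAt hz₃ q hq))]
  have hxx₁ : pdx (pdx z₁) p = pdx (pdx u₁) p * z₃ p + pdx u₁ p * pdx z₃ p
      + (pdx u₁ p * pdx z₃ p + u₁ p * pdx (pdx z₃) p) := by
    rw [pdx_congr hΩ hx₁ hp]
    exact pdx_muladd (dslX_pdx hΩ hu₁d hp) (dslX (dAt hz₃ p hp)) (dslX (dAt hu₁d p hp))
      (dslX_pdx hΩ hz₃ hp)
  have hxy₁ : pdx (pdy z₁) p = pdx (pdy u₁) p * z₃ p + pdy u₁ p * pdx z₃ p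
      + (pdx u₁ p * pdy z₃ p + u₁ p * pdx (pdy z₃) p) := by
    rw [pdx_congr hΩ hy₁ hp]
    exact pdx_muladd (dslX_pdy hΩ hu₁d hp) (dslX (dAt hz₃ p hp)) (dslX (dAt hu₁d p hp))
      (dslX_pdy hΩ hz₃ hp)
  have hyy₁ : pdy (pdy z₁) p = pdy (pdy u₁) p * z₃ p + pdy u₁ p * pdy z₃ p
      + (pdy u₁ p * pdy z₃ p + u₁ p * pdy (pdy z₃) p) := by
    rw [pdy_congr hΩ hy₁ hp]
    exact pdy_muladd (dslY_pdy hΩ hu₁d hp) (dslY (dAt hz₃ p hp)) (dslY (dAt hu₁d p hp))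
      (dslY_pdy hΩ hz₃ hp)
  have hxx₂ : pdx (pdx z₂) p = pdx (pdx u₂) p * z₃ p + pdx u₂ p * pdx z₃ p
      + (pdx u₂ p * pdx z₃ p + u₂ p * pdx (pdx z₃) p) := by
    rw [pdx_congr hΩ hx₂ hp]
    exact pdx_muladd (dslX_pdx hΩ hu₂d hp) (dslX (dAt hz₃ p hp)) (dslX (dAt hu₂d p hp))
      (dslX_pdx hΩ hz₃ hp)
  have hxy₂ : pdx (pdy z₂) p = pdx (pdy u₂) p * z₃ p + pdy u₂ p * pdx z₃ p
      + (pdx u₂ p * pdy z₃ p + u₂ p * pdx (pdy z₃) p) := by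
    rw [pdx_congr hΩ hy₂ hp]
    exact pdx_muladd (dslX_pdy hΩ hu₂d hp) (dslX (dAt hz₃ p hp)) (dslX (dAt hu₂d p hp))
      (dslX_pdy hΩ hz₃ hp)
  have hyy₂ : pdy (pdy z₂) p = pdy (pdy u₂) p * z₃ p + pdy u₂ p * pdy z₃ p
      + (pdy u₂ p * pdy z₃ p + u₂ p * pdy (pdy z₃) p) := by
    rw [pdy_congr hΩ hy₂ hp]
    exact pdy_muladd (dslY_pdy hΩ hu₂d hp) (dslY (dAt hz₃ p hp)) (dslY (dAt hu₂d p hp))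
      (dslY_pdy hΩ hz₃ hp)
  obtain ⟨s1x, s1m, s1y⟩ := hsys₁ p hp
  obtain ⟨s2x, s2m, s2y⟩ := hsys₂ p hp
  obtain ⟨s3x, s3m, s3y⟩ := hsys₃ p hp
  have e0₁ := hE₁ hp
  have e0₂ := hE₂ hp
  have e1x := hx₁ hp
  have e1y := hy₁ hp
  have e2x := hx₂ hp
  have e2y := hy₂ hp
  simp only at e0₁ e0₂ e1x e1y e2x e2y
  have st_x1 : pdx (pdx u₁) p * z₃ p
      = (a₁ p * pdx u₁ p + a₂ p * pdy u₁ p) * z₃ p - 2 * pdx u₁ p * pdx z₃ p := by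
    linear_combination s1x - hxx₁ + a₁ p * e1x + a₂ p * e1y + a₃ p * e0₁ - u₁ p * s3x
  have st_m1 : pdx (pdy u₁) p * z₃ p
      = (b₁ p * pdx u₁ p + b₂ p * pdy u₁ p) * z₃ p
        - pdx u₁ p * pdy z₃ p - pdy u₁ p * pdx z₃ p := by
    linear_combination s1m - hxy₁ + b₁ p * e1x + b₂ p * e1y + b₃ p * e0₁ - u₁ p * s3m
  have st_y1 : pdy (pdy u₁) p * z₃ p
      = (c₁ p * pdx u₁ p + c₂ p * pdy u₁ p) * z₃ p - 2 * pdy u₁ p * pdy z₃ p := by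
    linear_combination s1y - hyy₁ + c₁ p * e1x + c₂ p * e1y + c₃ p * e0₁ - u₁ p * s3y
  have st_x2 : pdx (pdx u₂) p * z₃ p
      = (a₁ p * pdx u₂ p + a₂ p * pdy u₂ p) * z₃ p - 2 * pdx u₂ p * pdx z₃ p := by
    linear_combination s2x - hxx₂ + a₁ p * e2x + a₂ p * e2y + a₃ p * e0₂ - u₂ p * s3x
  have st_m2 : pdx (pdy u₂) p * z₃ p
      = (b₁ p * pdx u₂ p + b₂ p * pdy u₂ p) * z₃ p
        - pdx u₂ p * pdy z₃ p - pdy u₂ p * pdx z₃ p := by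
    linear_combination s2m - hxy₂ + b₁ p * e2x + b₂ p * e2y + b₃ p * e0₂ - u₂ p * s3m
  have st_y2 : pdy (pdy u₂) p * z₃ p
      = (c₁ p * pdx u₂ p + c₂ p * pdy u₂ p) * z₃ p - 2 * pdy u₂ p * pdy z₃ p := by
    linear_combination s2y - hyy₂ + c₁ p * e2x + c₂ p * e2y + c₃ p * e0₂ - u₂ p * s3y
  have hJp := hJ p hp
  have hZ := hz₃0 p hp
  refine ⟨?_, ?_, ?_, ?_⟩
  · simp only [brX, Jac] at hJp ⊢
    rw [div_eq_iff hJp]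
    apply mul_left_cancel₀ hZ
    linear_combination pdx u₁ p * st_x2 - pdx u₂ p * st_x1
  · simp only [brY, Jac] at hJp ⊢
    rw [div_eq_iff hJp]
    apply mul_left_cancel₀ hZ
    linear_combination - pdy u₁ p * st_y2 + pdy u₂ p * st_y1
  · simp only [sqX, Jac] at hJp ⊢
    rw [div_eq_iff hJp]
    apply mul_left_cancel₀ hZ
    linear_combination pdy u₁ p * st_x2 - pdy u₂ p * st_x1
      + 2 * pdx u₁ p * st_m2 - 2 * pdx u₂ p * st_m1
  · simp only [sqY, Jac] at hJp ⊢
    rw [div_eq_iff hJp]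
    apply mul_left_cancel₀ hZ
    linear_combination - pdx u₁ p * st_y2 + pdx u₂ p * st_y1
      - 2 * pdy u₁ p * st_m2 + 2 * pdy u₂ p * st_m1
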